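/- (Hurwitz formula, affine normalized form.) Let L be an algebraically closed field, let d ≥ 1 be an integer, and let f, g ∈ L[X] be coprime polynomials with natDegree f = d and natDegree g = d − 1 (so that the rational function φ = f/g has degree d and fixes ∞ with ∞ not a critical point). Then the Wronskian W = f'·g − f·g' is nonzero and the multiset of roots of W in L has cardinality 2d − 2; that is, the sum over all x ∈ L of the weights w_φ(x) = rootMultiplicity x W equals 2·deg(φ) − 2. -/

import Mathlib

open Polynomial

/-- Hurwitz formula, affine normalized form: over an algebraically closed field, if `f, g` are
coprime with `deg f = d ≥ 1` and `deg g = d − 1` (so `φ = f/g` has degree `d` and fixes `∞`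
with `∞` not critical), then the Wronskian `W = f'·g − f·g'` is nonzero and its multiset of
roots has cardinality `2d − 2`; i.e. the total weight of the critical points is `2·deg φ − 2`. -/
theorem hurwitz_formula_affine {L : Type*} [Field L] [IsAlgClosed L] (d : ℕ) (hd : 1 ≤ d)
    (f g : L[X]) (hfg : IsCoprime f g) (hf : f.natDegree = d) (hg : g.natDegree = d - 1) :
    derivative f * g - f * derivative g ≠ 0 ∧
    Multiset.card (derivative f * g - f * derivative g).roots = 2 * d - 2 := by
  obtain ⟨k, rfl⟩ : ∃ k, d = k + 1 := ⟨d - 1, by omega⟩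
  simp only [Nat.add_sub_cancel] at hg
  have hf0 : f ≠ 0 := fun h => by simp [h] at hf
  have hg0 : g ≠ 0 := by
    intro h
    subst h
    have := Polynomial.natDegree_eq_zero_of_isUnit (isCoprime_zero_right.mp hfg)
    omega
  have ha : f.coeff (k + 1) ≠ 0 := by
    rw [← hf]; exact leadingCoeff_ne_zero.mpr hf0
  have hb : g.coeff k ≠ 0 := by
    rw [← hg]; exact leadingCoeff_ne_zero.mpr hg0
  set W : L[X] := derivative f * g - f * derivative g with hW
  have hdf : (derivative f).natDegree ≤ k := by
    have := natDegree_derivative_le f; omega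
  rcases Nat.eq_zero_or_pos k with hk | hk
  · -- d = 1 : g is a nonzero constant, f has degree 1
    subst hk
    obtain ⟨c, rfl⟩ := Polynomial.natDegree_eq_zero.mp hg
    have hgd : derivative (C c : L[X]) = 0 := derivative_C
    have hW' : W = derivative f * C c := by rw [hW, hgd, mul_zero, sub_zero]
    have hdf0 : derivative f ≠ 0 := by
      intro h
      have h2 : (derivative f).coeff 0 = f.coeff 1 := by
        simpa using coeff_derivative f 0
      rw [h] at h2
      simp at h2
      exact ha h2.symm
    have hWne : W ≠ 0 := by
      rw [hW']
      exact mul_ne_zero hdf0 (by simpa using hb)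
    refine ⟨hWne, ?_⟩
    have hdeg : W.natDegree = 0 := by
      rw [hW']
      have h1 : (derivative f).natDegree = 0 := Nat.le_zero.mp hdf
      rw [natDegree_mul hdf0 (by simpa using hb), h1, natDegree_C]
    have := Polynomial.card_roots' W
    omega
  · -- d ≥ 2
    obtain ⟨m, rfl⟩ : ∃ m, k = m + 1 := ⟨k - 1, by omega⟩
    have hdg : (derivative g).natDegree ≤ m := by
      have := natDegree_derivative_le g; omega
    have hc1 : (derivative f * g).coeff ((m + 1) + (m + 1)) =
        f.coeff (m + 2) * (m + 2 : ℕ) * g.coeff (m + 1) := by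
      rw [coeff_mul_add_eq_of_natDegree_le hdf (le_of_eq hg), coeff_derivative]
      push_cast; ring
    have hc2 : (f * derivative g).coeff ((m + 2) + m) =
        f.coeff (m + 2) * (g.coeff (m + 1) * (m + 1 : ℕ)) := by
      rw [coeff_mul_add_eq_of_natDegree_le (le_of_eq hf) hdg, coeff_derivative]
      push_cast; ring
    have hcW : W.coeff (2 * m + 2) = f.coeff (m + 2) * g.coeff (m + 1) := by
      rw [show (m + 1) + (m + 1) = 2 * m + 2 from by ring] at hc1
      rw [show (m + 2) + m = 2 * m + 2 from by ring] at hc2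
      rw [hW, coeff_sub, hc1, hc2]
      push_cast; ring
    have hcne : W.coeff (2 * m + 2) ≠ 0 := by
      rw [hcW]; exact mul_ne_zero ha hb
    have hWne : W ≠ 0 := fun h => hcne (by rw [h]; simp)
    refine ⟨hWne, ?_⟩
    have hle : W.natDegree ≤ 2 * m + 2 := by
      refine (natDegree_sub_le _ _).trans (max_le ?_ ?_)
      · exact natDegree_mul_le.trans (by omega)
      · refine natDegree_mul_le.trans (by omega)
    have hge : 2 * m + 2 ≤ W.natDegree := le_natDegree_of_ne_zero hcne
    have hdeg : W.natDegree = 2 * m + 2 := le_antisymm hle hge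
    have hsplit := (splits_iff_card_roots (f := W)).mp (IsAlgClosed.splits W)
    rw [hsplit, hdeg]
    omega
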